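/- Under the stated assumptions, the jumps j(0) and ĵ(0) are determined by the metric of the sphere: lim_{ε→0⁺} ‖r(ε) − r(0)‖ / ‖\overline{r(ε)} + r(0)‖ = (1 − ĵ(0))/(1 + ĵ(0)) and lim_{ε→0⁺} (‖r(ε) − \overline{r(ε)}‖ − 2)/(2ε) = j(0)/(1 − ĵ(0)). -/

import Mathlib

open Metric Set Filter Topology

/-- A point `x` of the unit sphere of `X` is *smooth* if there is a unique continuous
linear functional `g : X →L[ℝ] ℝ` with `g x = 1 = ‖g‖`. -/
def IsSmoothPoint {X : Type*} [NormedAddCommGroup X] [NormedSpace ℝ X] (x : X) : Prop :=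
  ∃! g : X →L[ℝ] ℝ, g x = 1 ∧ ‖g‖ = 1

/-- A real Banach space is *strictly convex* if every convex subset of its unit sphere
contains at most one point. -/
def StrictlyConvexSphere (X : Type*) [NormedAddCommGroup X] [NormedSpace ℝ X] : Prop :=
  ∀ s : Set X, s ⊆ sphere (0 : X) 1 → Convex ℝ s → s.Subsingleton

noncomputable def rd (f : ℝ → ℝ) (x : ℝ) : ℝ := sInf (slope f x '' Ioi x)
noncomputable def ld (f : ℝ → ℝ) (x : ℝ) : ℝ := sSup (slope f x '' Iio x)

variable {f : ℝ → ℝ} (hf : ConvexOn ℝ univ f)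

theorem slope_mono_right (hf : ConvexOn ℝ univ f) (x : ℝ) : MonotoneOn (slope f x) (Ioi x) := by
  intro y hy z hz hyz
  simp only [slope_def_field, div_eq_iff] at *
  have := hf.secant_mono (a := x) (x := y) (y := z) trivial trivial trivial
    (ne_of_gt hy) (ne_of_gt hz) hyz
  simpa [slope_def_field] using this

theorem slope_le_slope_left (hf : ConvexOn ℝ univ f) {w x y : ℝ} (hw : w < x) (hy : x < y) :
    slope f w x ≤ slope f x y := by
  simpa [slope_def_field] using hf.slope_mono_adjacent (x := w) (y := x) (z := y)
    trivial trivial hw hy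

theorem bddBelow_slope (hf : ConvexOn ℝ univ f) (x : ℝ) :
    BddBelow (slope f x '' Ioi x) := by
  refine ⟨slope f (x - 1) x, ?_⟩
  rintro v ⟨y, hy, rfl⟩
  exact slope_le_slope_left hf (by linarith) hy

theorem bddAbove_slope (hf : ConvexOn ℝ univ f) (x : ℝ) :
    BddAbove (slope f x '' Iio x) := by
  refine ⟨slope f x (x + 1), ?_⟩
  rintro v ⟨y, hy, rfl⟩
  rw [slope_comm]
  exact slope_le_slope_left hf hy (by linarith)

theorem hasDerivWithinAt_rd (hf : ConvexOn ℝ univ f) (x : ℝ) :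
    HasDerivWithinAt f (rd f x) (Ici x) x := by
  rw [hasDerivWithinAt_iff_tendsto_slope]
  have : Ici x \ {x} = Ioi x := Ici_sdiff_left
  rw [this]
  exact (slope_mono_right hf x).tendsto_nhdsGT (bddBelow_slope hf x)

theorem slope_mono_left (hf : ConvexOn ℝ univ f) (x : ℝ) : MonotoneOn (slope f x) (Iio x) := by
  intro y hy z hz hyz
  simp only [slope_def_field]
  exact hf.secant_mono trivial trivial trivial (ne_of_lt hy) (ne_of_lt hz) hyz

theorem hasDerivWithinAt_ld (hf : ConvexOn ℝ univ f) (x : ℝ) :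
    HasDerivWithinAt f (ld f x) (Iic x) x := by
  rw [hasDerivWithinAt_iff_tendsto_slope]
  have : Iic x \ {x} = Iio x := Iic_diff_right
  rw [this]
  exact (slope_mono_left hf x).tendsto_nhdsLT (bddAbove_slope hf x)

theorem rd_le_slope (hf : ConvexOn ℝ univ f) {x y : ℝ} (hxy : x < y) :
    rd f x ≤ slope f x y :=
  csInf_le (bddBelow_slope hf x) ⟨y, hxy, rfl⟩

theorem slope_le_rd (hf : ConvexOn ℝ univ f) {w x : ℝ} (hwx : w < x) :
    slope f w x ≤ rd f x :=
  le_csInf (⟨slope f x (x + 1), ⟨x + 1, by simp, rfl⟩⟩) (by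
    rintro v ⟨z, hz, rfl⟩
    exact slope_le_slope_left hf hwx hz)

theorem slope_le_ld (hf : ConvexOn ℝ univ f) {w x : ℝ} (hwx : w < x) :
    slope f x w ≤ ld f x :=
  le_csSup (bddAbove_slope hf x) ⟨w, hwx, rfl⟩

theorem rd_mono (hf : ConvexOn ℝ univ f) : Monotone (rd f) := by
  intro x y hxy
  rcases eq_or_lt_of_le hxy with rfl | hxy
  · exact le_rfl
  · exact (rd_le_slope hf hxy).trans (slope_le_rd hf hxy)

theorem rd_tendsto_right (hf : ConvexOn ℝ univ f) (hc : Continuous f) (x : ℝ) :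
    Tendsto (rd f) (𝓝[>] x) (𝓝 (rd f x)) := by
  refine tendsto_order.2 ⟨fun l hl => ?_, fun u hu => ?_⟩
  · filter_upwards [self_mem_nhdsWithin] with m hm
    exact hl.trans_le (rd_mono hf (le_of_lt hm))
  · have hne : (slope f x '' Ioi x).Nonempty := ⟨slope f x (x + 1), ⟨x + 1, by simp, rfl⟩⟩
    obtain ⟨v, ⟨y, hy, rfl⟩, hv⟩ :=
      exists_lt_of_csInf_lt hne (show rd f x < (rd f x + u) / 2 by linarith)
    have hsxy : slope f x y < u := by linarith
    have hcont : Tendsto (fun m => slope f m y) (𝓝[>] x) (𝓝 (slope f x y)) := by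
      have : Tendsto (fun m => slope f m y) (𝓝 x) (𝓝 (slope f x y)) := by
        simp only [slope_def_field]
        exact (tendsto_const_nhds.sub (hc.tendsto x)).div
          (tendsto_const_nhds.sub tendsto_id) (sub_ne_zero.2 (ne_of_gt hy))
      exact this.mono_left nhdsWithin_le_nhds
    filter_upwards [hcont.eventually_lt_const hsxy, Ioo_mem_nhdsGT hy] with m h1 h2
    exact (rd_le_slope hf h2.2).trans_lt h1

theorem rd_tendsto_left (hf : ConvexOn ℝ univ f) (hc : Continuous f) (x : ℝ) :
    Tendsto (rd f) (𝓝[<] x) (𝓝 (ld f x)) := by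
  refine tendsto_order.2 ⟨fun l hl => ?_, fun u hu => ?_⟩
  · have hne : (slope f x '' Iio x).Nonempty := ⟨slope f x (x - 1), ⟨x - 1, by simp, rfl⟩⟩
    obtain ⟨v, ⟨w, hw, rfl⟩, hv⟩ := exists_lt_of_lt_csSup hne hl
    rw [slope_comm] at hv
    have hcont : Tendsto (fun m => slope f w m) (𝓝[<] x) (𝓝 (slope f w x)) := by
      have : Tendsto (fun m => slope f w m) (𝓝 x) (𝓝 (slope f w x)) := by
        simp only [slope_def_field]
        exact ((hc.tendsto x).sub tendsto_const_nhds).div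
          (tendsto_id.sub tendsto_const_nhds) (sub_ne_zero.2 (ne_of_gt hw))
      exact this.mono_left nhdsWithin_le_nhds
    filter_upwards [hcont.eventually_const_lt hv, Ioo_mem_nhdsLT hw] with m h1 h2
    exact h1.trans_le (slope_le_rd hf h2.1)
  · filter_upwards [self_mem_nhdsWithin] with m hm
    refine lt_of_le_of_lt ?_ hu
    refine (rd_le_slope hf hm).trans ?_
    rw [slope_comm]
    exact slope_le_ld hf hm

section Geometry

variable {X : Type*} [NormedAddCommGroup X] [NormedSpace ℝ X]

noncomputable def gf (e₁ e₂ : X) : ℝ → ℝ := fun m => ‖e₁ + m • e₂‖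

theorem gf_convex (e₁ e₂ : X) : ConvexOn ℝ univ (gf e₁ e₂) := by
  refine ⟨convex_univ, fun m _ n _ a b ha hb hab => ?_⟩
  have key : e₁ + (a * m + b * n) • e₂ = a • (e₁ + m • e₂) + b • (e₁ + n • e₂) := by
    have : e₁ = (a + b) • e₁ := by rw [hab, one_smul]
    rw [smul_add, smul_add, smul_smul, smul_smul]
    nth_rewrite 1 [this]
    rw [add_smul, add_smul]
    abel
  simp only [gf, smul_eq_mul, key]
  calc ‖a • (e₁ + m • e₂) + b • (e₁ + n • e₂)‖
      ≤ ‖a • (e₁ + m • e₂)‖ + ‖b • (e₁ + n • e₂)‖ := norm_add_le _ _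
    _ = a * ‖e₁ + m • e₂‖ + b * ‖e₁ + n • e₂‖ := by
        rw [norm_smul, norm_smul, Real.norm_eq_abs, Real.norm_eq_abs, abs_of_nonneg ha,
          abs_of_nonneg hb]

theorem gf_cont (e₁ e₂ : X) : Continuous (gf e₁ e₂) := by
  unfold gf; fun_prop

theorem gf_pos {e₁ e₂ : X} (hInd : LinearIndependent ℝ ![e₁, e₂]) (m : ℝ) :
    0 < gf e₁ e₂ m := by
  rw [gf, norm_pos_iff]
  intro h
  have := (LinearIndependent.pair_iff.1 hInd) 1 m (by simpa using h)
  exact one_ne_zero this.1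

end Geometry

section Geometry2

variable {X : Type*} [NormedAddCommGroup X] [NormedSpace ℝ X]

noncomputable def qf (e₁ e₂ : X) : ℝ → X := fun m => (gf e₁ e₂ m)⁻¹ • (e₁ + m • e₂)

/-- derivative of `q` at `m` given that `g` has one-sided derivative `d` there -/
noncomputable def Qd (e₁ e₂ : X) (m d : ℝ) : X :=
  (gf e₁ e₂ m)⁻¹ • e₂ - (d / (gf e₁ e₂ m) ^ 2) • (e₁ + m • e₂)

theorem hasDerivWithinAt_qf {e₁ e₂ : X} (hInd : LinearIndependent ℝ ![e₁, e₂])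
    {m d : ℝ} {s : Set ℝ} (hd : HasDerivWithinAt (gf e₁ e₂) d s m) :
    HasDerivWithinAt (qf e₁ e₂) (Qd e₁ e₂ m d) s m := by
  have h1 : HasDerivWithinAt (fun m : ℝ => e₁ + m • e₂) e₂ s m := by
    simpa using (((hasDerivAt_id m).smul_const e₂).const_add e₁).hasDerivWithinAt
  have h2 : HasDerivWithinAt (fun m => (gf e₁ e₂ m)⁻¹) (-d / (gf e₁ e₂ m) ^ 2) s m :=
    hd.inv (ne_of_gt (gf_pos hInd m))
  have := h2.smul h1
  rw [Qd]
  convert this using 1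
  · rfl
  simp only [neg_div, neg_smul]
  abel

theorem norm_Qd_pos {e₁ e₂ : X} (hInd : LinearIndependent ℝ ![e₁, e₂]) (m d : ℝ) :
    0 < ‖Qd e₁ e₂ m d‖ := by
  rw [norm_pos_iff, Qd, sub_ne_zero]
  intro h
  -- compare coefficients of e₂
  have hg := ne_of_gt (gf_pos hInd m)
  have : (gf e₁ e₂ m)⁻¹ • e₂ - (d / (gf e₁ e₂ m) ^ 2) • (e₁ + m • e₂) = 0 := by
    rw [h]; abel
  have hcomb : (d / (gf e₁ e₂ m) ^ 2) • e₁ +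
      ((d / (gf e₁ e₂ m) ^ 2) * m - (gf e₁ e₂ m)⁻¹) • e₂ = 0 := by
    rw [smul_add, smul_smul] at this
    rw [sub_smul]
    rw [sub_eq_zero] at this
    rw [this]
    abel
  obtain ⟨h1, h2⟩ := (LinearIndependent.pair_iff.1 hInd) _ _ hcomb
  rw [h1, zero_mul, zero_sub, neg_eq_zero, inv_eq_zero] at h2
  exact hg h2

end Geometry2

section Geometry3

open Real

variable {X : Type*} [NormedAddCommGroup X] [NormedSpace ℝ X]

noncomputable def pf (e₁ e₂ : X) : ℝ → X := fun t =>
  ‖Real.cos t • e₁ + Real.sin t • e₂‖⁻¹ • (Real.cos t • e₁ + Real.sin t • e₂)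

theorem circ_ne_zero {e₁ e₂ : X} (hInd : LinearIndependent ℝ ![e₁, e₂]) (t : ℝ) :
    Real.cos t • e₁ + Real.sin t • e₂ ≠ 0 := by
  intro h
  obtain ⟨h1, h2⟩ := (LinearIndependent.pair_iff.1 hInd) _ _ h
  have := Real.sin_sq_add_cos_sq t
  rw [h1, h2] at this
  norm_num at this

theorem pf_cont {e₁ e₂ : X} (hInd : LinearIndependent ℝ ![e₁, e₂]) :
    Continuous (pf e₁ e₂) := by
  have hc : Continuous fun t => Real.cos t • e₁ + Real.sin t • e₂ := by fun_prop
  exact ((hc.norm.inv₀ (fun t => norm_ne_zero_iff.2 (circ_ne_zero hInd t))).smul hc)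

theorem pf_eq_qf_tan {e₁ e₂ : X} (hInd : LinearIndependent ℝ ![e₁, e₂])
    {t : ℝ} (ht : t ∈ Ioo (-(π/2)) (π/2)) :
    pf e₁ e₂ t = qf e₁ e₂ (Real.tan t) := by
  have hc : 0 < Real.cos t := Real.cos_pos_of_mem_Ioo ht
  have hv : Real.cos t • e₁ + Real.sin t • e₂ = Real.cos t • (e₁ + Real.tan t • e₂) := by
    rw [smul_add, smul_smul, Real.tan_eq_sin_div_cos, mul_div_cancel₀ _ (ne_of_gt hc)]
  rw [pf, qf, gf, hv, norm_smul, Real.norm_eq_abs, abs_of_pos hc, smul_smul, mul_inv]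
  congr 1
  have hn : ‖e₁ + Real.tan t • e₂‖ ≠ 0 := ne_of_gt (gf_pos hInd (Real.tan t))
  field_simp

noncomputable def Pd (e₁ e₂ : X) (t d : ℝ) : X :=
  (1 / Real.cos t ^ 2) • Qd e₁ e₂ (Real.tan t) d

theorem hasDerivWithinAt_pf_right {e₁ e₂ : X} (hInd : LinearIndependent ℝ ![e₁, e₂])
    {t : ℝ} (ht : t ∈ Ioo (-(π/2)) (π/2)) :
    HasDerivWithinAt (pf e₁ e₂) (Pd e₁ e₂ t (rd (gf e₁ e₂) (Real.tan t))) (Ici t) t := by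
  have hc : Real.cos t ≠ 0 := ne_of_gt (Real.cos_pos_of_mem_Ioo ht)
  set s : Set ℝ := Ici t ∩ Ioo (-(π/2)) (π/2) with hs
  have htan : HasDerivWithinAt Real.tan (1 / Real.cos t ^ 2) s t :=
    (Real.hasDerivAt_tan hc).hasDerivWithinAt
  have hq : HasDerivWithinAt (qf e₁ e₂)
      (Qd e₁ e₂ (Real.tan t) (rd (gf e₁ e₂) (Real.tan t))) (Ici (Real.tan t)) (Real.tan t) :=
    hasDerivWithinAt_qf hInd (hasDerivWithinAt_rd (gf_convex e₁ e₂) _)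
  have hmaps : MapsTo Real.tan s (Ici (Real.tan t)) := fun u hu =>
    Real.strictMonoOn_tan.monotoneOn ht hu.2 hu.1
  have hcomp := HasDerivWithinAt.scomp t hq htan hmaps
  have : HasDerivWithinAt (pf e₁ e₂) (Pd e₁ e₂ t (rd (gf e₁ e₂) (Real.tan t))) s t := by
    refine hcomp.congr (fun u hu => pf_eq_qf_tan hInd hu.2) (pf_eq_qf_tan hInd ht)
  exact (hasDerivWithinAt_inter (Ioo_mem_nhds ht.1 ht.2)).1 this

theorem hasDerivWithinAt_pf_left {e₁ e₂ : X} (hInd : LinearIndependent ℝ ![e₁, e₂]) :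
    HasDerivWithinAt (pf e₁ e₂) (Pd e₁ e₂ 0 (ld (gf e₁ e₂) 0)) (Iic 0) 0 := by
  have hpi : (0:ℝ) ∈ Ioo (-(π/2)) (π/2) := by
    have := Real.pi_pos
    constructor <;> [linarith; linarith]
  have hc : Real.cos 0 ≠ 0 := ne_of_gt (Real.cos_pos_of_mem_Ioo hpi)
  set s : Set ℝ := Iic 0 ∩ Ioo (-(π/2)) (π/2) with hs
  have htan : HasDerivWithinAt Real.tan (1 / Real.cos 0 ^ 2) s 0 :=
    (Real.hasDerivAt_tan hc).hasDerivWithinAt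
  have hq : HasDerivWithinAt (qf e₁ e₂)
      (Qd e₁ e₂ (Real.tan 0) (ld (gf e₁ e₂) 0)) (Iic (Real.tan 0)) (Real.tan 0) := by
    rw [Real.tan_zero]
    exact hasDerivWithinAt_qf hInd (hasDerivWithinAt_ld (gf_convex e₁ e₂) _)
  have hmaps : MapsTo Real.tan s (Iic (Real.tan 0)) := fun u hu =>
    Real.strictMonoOn_tan.monotoneOn hu.2 hpi hu.1
  have hcomp := HasDerivWithinAt.scomp 0 hq htan hmaps
  have : HasDerivWithinAt (pf e₁ e₂) (Pd e₁ e₂ 0 (ld (gf e₁ e₂) 0)) s 0 := by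
    refine (hcomp.congr (fun u hu => pf_eq_qf_tan hInd hu.2) (pf_eq_qf_tan hInd hpi))
  exact (hasDerivWithinAt_inter (Ioo_mem_nhds hpi.1 hpi.2)).1 this

theorem derivWithin_pf {e₁ e₂ : X} (hInd : LinearIndependent ℝ ![e₁, e₂])
    {t : ℝ} (ht : t ∈ Ioo (-(π/2)) (π/2)) :
    derivWithin (pf e₁ e₂) (Ici t) t = Pd e₁ e₂ t (rd (gf e₁ e₂) (Real.tan t)) :=
  (hasDerivWithinAt_pf_right hInd ht).derivWithin (uniqueDiffOn_Ici t t self_mem_Ici)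

end Geometry3

section FandAvg

open Real

variable {X : Type*} [NormedAddCommGroup X] [NormedSpace ℝ X]

noncomputable def MM (e₁ e₂ : X) : ℝ → ℝ := fun u =>
  (1 / Real.cos u ^ 2) * ‖Qd e₁ e₂ (Real.tan u) (rd (gf e₁ e₂) (Real.tan u))‖

theorem norm_Pd_eq (e₁ e₂ : X) (u : ℝ) :
    ‖Pd e₁ e₂ u (rd (gf e₁ e₂) (Real.tan u))‖ = MM e₁ e₂ u := by
  rw [Pd, MM, norm_smul, Real.norm_eq_abs, abs_of_nonneg]
  positivity

theorem MM_measurable {e₁ e₂ : X} (hInd : LinearIndependent ℝ ![e₁, e₂]) :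
    Measurable (MM e₁ e₂) := by
  have hW : Continuous fun z : ℝ × ℝ =>
      ‖(gf e₁ e₂ z.1)⁻¹ • e₂ - (z.2 / (gf e₁ e₂ z.1) ^ 2) • (e₁ + z.1 • e₂)‖ := by
    have hg : Continuous fun z : ℝ × ℝ => gf e₁ e₂ z.1 := (gf_cont e₁ e₂).comp continuous_fst
    have hgne : ∀ z : ℝ × ℝ, gf e₁ e₂ z.1 ≠ 0 := fun z => ne_of_gt (gf_pos hInd _)
    apply Continuous.norm
    apply Continuous.sub
    · exact (hg.inv₀ hgne).smul continuous_const
    · refine (continuous_snd.div (hg.pow 2) (fun z => pow_ne_zero 2 (hgne z))).smul ?_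
      fun_prop
  have htan : Measurable Real.tan := by
    have : Real.tan = fun x => Real.sin x / Real.cos x := funext Real.tan_eq_sin_div_cos
    rw [this]
    exact Real.continuous_sin.measurable.div Real.continuous_cos.measurable
  have hrd : Measurable (rd (gf e₁ e₂)) := (rd_mono (gf_convex e₁ e₂)).measurable
  have h1 : Measurable fun u => ‖Qd e₁ e₂ (Real.tan u) (rd (gf e₁ e₂) (Real.tan u))‖ := by
    have := hW.measurable.comp (htan.prodMk ((hrd.comp htan)))
    exact this
  have h2 : Measurable fun u : ℝ => 1 / Real.cos u ^ 2 := by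
    exact (measurable_const.div ((Real.continuous_cos.measurable).pow measurable_const))
  exact h2.mul h1

theorem FF_eq_MM {e₁ e₂ : X} (hInd : LinearIndependent ℝ ![e₁, e₂]) {u : ℝ}
    (hu : u ∈ Ioo (-(π/2)) (π/2)) :
    ‖derivWithin (pf e₁ e₂) (Ici u) u‖ = MM e₁ e₂ u := by
  rw [derivWithin_pf hInd hu, norm_Pd_eq]

theorem tan_tendsto_right : Tendsto Real.tan (𝓝[>] (0:ℝ)) (𝓝[>] (0:ℝ)) := by
  rw [tendsto_nhdsWithin_iff]
  constructor
  · have : ContinuousAt Real.tan 0 := by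
      apply Real.continuousAt_tan.2
      simp
    simpa [Real.tan_zero] using this.continuousWithinAt.tendsto
  · filter_upwards [Ioo_mem_nhdsGT_of_mem (by constructor <;> [exact le_rfl; positivity] :
      (0:ℝ) ∈ Ico 0 (π/2))] with u hu
    exact Real.tan_pos_of_pos_of_lt_pi_div_two hu.1 hu.2

theorem tan_tendsto_left : Tendsto Real.tan (𝓝[<] (0:ℝ)) (𝓝[<] (0:ℝ)) := by
  rw [tendsto_nhdsWithin_iff]
  constructor
  · have : ContinuousAt Real.tan 0 := by
      apply Real.continuousAt_tan.2
      simp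
    simpa [Real.tan_zero] using this.continuousWithinAt.tendsto
  · filter_upwards [Ioo_mem_nhdsLT_of_mem (by constructor <;> [skip; exact le_rfl] <;>
      (have := Real.pi_pos; linarith) : (0:ℝ) ∈ Ioc (-(π/2)) 0)] with u hu
    exact Real.tan_neg_of_neg_of_pi_div_two_lt hu.2 (by linarith [hu.1])

theorem MM_tendsto_right {e₁ e₂ : X} (hInd : LinearIndependent ℝ ![e₁, e₂]) :
    Tendsto (MM e₁ e₂) (𝓝[>] (0:ℝ)) (𝓝 ‖Qd e₁ e₂ 0 (rd (gf e₁ e₂) 0)‖) := by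
  have hrd : Tendsto (fun u => rd (gf e₁ e₂) (Real.tan u)) (𝓝[>] (0:ℝ))
      (𝓝 (rd (gf e₁ e₂) 0)) :=
    (rd_tendsto_right (gf_convex e₁ e₂) (gf_cont e₁ e₂) 0).comp tan_tendsto_right
  have htan0 : Tendsto Real.tan (𝓝[>] (0:ℝ)) (𝓝 0) :=
    tan_tendsto_right.mono_right nhdsWithin_le_nhds
  have hW : Continuous fun z : ℝ × ℝ => ‖Qd e₁ e₂ z.1 z.2‖ := by
    unfold Qd
    have hg : Continuous fun z : ℝ × ℝ => gf e₁ e₂ z.1 := (gf_cont e₁ e₂).comp continuous_fst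
    have hgne : ∀ z : ℝ × ℝ, gf e₁ e₂ z.1 ≠ 0 := fun z => ne_of_gt (gf_pos hInd _)
    apply Continuous.norm
    apply Continuous.sub
    · exact (hg.inv₀ hgne).smul continuous_const
    · refine (continuous_snd.div (hg.pow 2) (fun z => pow_ne_zero 2 (hgne z))).smul ?_
      fun_prop
  have h1 : Tendsto (fun u => ‖Qd e₁ e₂ (Real.tan u) (rd (gf e₁ e₂) (Real.tan u))‖)
      (𝓝[>] (0:ℝ)) (𝓝 ‖Qd e₁ e₂ 0 (rd (gf e₁ e₂) 0)‖) := by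
    have := (hW.tendsto (0, rd (gf e₁ e₂) 0)).comp (htan0.prodMk_nhds hrd)
    exact this
  have h2 : Tendsto (fun u : ℝ => 1 / Real.cos u ^ 2) (𝓝[>] (0:ℝ)) (𝓝 1) := by
    have : ContinuousAt (fun u : ℝ => 1 / Real.cos u ^ 2) 0 := by
      apply ContinuousAt.div continuousAt_const (Real.continuous_cos.continuousAt.pow 2)
      simp
    simpa using this.continuousWithinAt.tendsto
  have := h2.mul h1
  rw [one_mul] at this
  exact this.congr (fun u => rfl)

theorem MM_tendsto_left {e₁ e₂ : X} (hInd : LinearIndependent ℝ ![e₁, e₂]) :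
    Tendsto (MM e₁ e₂) (𝓝[<] (0:ℝ)) (𝓝 ‖Qd e₁ e₂ 0 (ld (gf e₁ e₂) 0)‖) := by
  have hrd : Tendsto (fun u => rd (gf e₁ e₂) (Real.tan u)) (𝓝[<] (0:ℝ))
      (𝓝 (ld (gf e₁ e₂) 0)) :=
    (rd_tendsto_left (gf_convex e₁ e₂) (gf_cont e₁ e₂) 0).comp tan_tendsto_left
  have htan0 : Tendsto Real.tan (𝓝[<] (0:ℝ)) (𝓝 0) :=
    tan_tendsto_left.mono_right nhdsWithin_le_nhds
  have hW : Continuous fun z : ℝ × ℝ => ‖Qd e₁ e₂ z.1 z.2‖ := by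
    unfold Qd
    have hg : Continuous fun z : ℝ × ℝ => gf e₁ e₂ z.1 := (gf_cont e₁ e₂).comp continuous_fst
    have hgne : ∀ z : ℝ × ℝ, gf e₁ e₂ z.1 ≠ 0 := fun z => ne_of_gt (gf_pos hInd _)
    apply Continuous.norm
    apply Continuous.sub
    · exact (hg.inv₀ hgne).smul continuous_const
    · refine (continuous_snd.div (hg.pow 2) (fun z => pow_ne_zero 2 (hgne z))).smul ?_
      fun_prop
  have h1 : Tendsto (fun u => ‖Qd e₁ e₂ (Real.tan u) (rd (gf e₁ e₂) (Real.tan u))‖)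
      (𝓝[<] (0:ℝ)) (𝓝 ‖Qd e₁ e₂ 0 (ld (gf e₁ e₂) 0)‖) := by
    have := (hW.tendsto (0, ld (gf e₁ e₂) 0)).comp (htan0.prodMk_nhds hrd)
    exact this
  have h2 : Tendsto (fun u : ℝ => 1 / Real.cos u ^ 2) (𝓝[<] (0:ℝ)) (𝓝 1) := by
    have : ContinuousAt (fun u : ℝ => 1 / Real.cos u ^ 2) 0 := by
      apply ContinuousAt.div continuousAt_const (Real.continuous_cos.continuousAt.pow 2)
      simp
    simpa using this.continuousWithinAt.tendsto
  have := h2.mul h1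
  rw [one_mul] at this
  exact this.congr (fun u => rfl)

end FandAvg

section Avg

theorem avg_core {M : ℝ → ℝ} {c ε t : ℝ} (hM : Measurable M) (ht : t ≠ 0)
    (hbound : ∀ᵐ u ∂MeasureTheory.volume, u ∈ Set.uIoc (0:ℝ) t → |M u - c| ≤ ε) :
    |(∫ u in (0:ℝ)..t, M u) / t - c| ≤ ε := by
  have hint : IntervalIntegrable M MeasureTheory.volume 0 t := by
    rw [intervalIntegrable_iff]
    refine MeasureTheory.Integrable.mono' (g := fun _ => |c| + ε)
      ((MeasureTheory.integrableOn_const_iff (C := |c| + ε)).2 (Or.inr ?_)) hM.aestronglyMeasurable ?_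
    · exact measure_Ioc_lt_top
    · refine (MeasureTheory.ae_restrict_iff' measurableSet_uIoc).2 ?_
      filter_upwards [hbound] with u hu huIoc
      have h2 := hu huIoc
      rw [Real.norm_eq_abs]
      calc |M u| ≤ |c| + |M u - c| := by
            have h3 := abs_add_le c (M u - c)
            have : c + (M u - c) = M u := by ring
            rw [this] at h3; exact h3
        _ ≤ |c| + ε := by linarith
  have key : (∫ u in (0:ℝ)..t, M u) - t * c = ∫ u in (0:ℝ)..t, (M u - c) := by
    rw [intervalIntegral.integral_sub hint intervalIntegrable_const,
      intervalIntegral.integral_const, smul_eq_mul, sub_zero, mul_comm]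
  have hb : |∫ u in (0:ℝ)..t, (M u - c)| ≤ ε * |t - 0| := by
    have := intervalIntegral.norm_integral_le_of_norm_le_const_ae
      (f := fun u => M u - c) (a := 0) (b := t) (C := ε) ?_
    · simpa [Real.norm_eq_abs] using this
    · filter_upwards [hbound] with x hx hxI
      rw [Real.norm_eq_abs]
      exact hx hxI
  rw [sub_zero] at hb
  have : |(∫ u in (0:ℝ)..t, M u) / t - c| = |(∫ u in (0:ℝ)..t, M u) - t * c| / |t| := by
    rw [← abs_div]
    congr 1
    field_simp
  rw [this, key, div_le_iff₀ (abs_pos.2 ht)]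
  exact hb

theorem avg_tendsto_right {F M : ℝ → ℝ} (hM : Measurable M) {δ c : ℝ} (hδ : 0 < δ)
    (hFM : ∀ u ∈ Ioc (0:ℝ) δ, F u = M u) (hlim : Tendsto F (𝓝[>] (0:ℝ)) (𝓝 c)) :
    Tendsto (fun t => (∫ u in (0:ℝ)..t, F u) / t) (𝓝[>] (0:ℝ)) (𝓝 c) := by
  rw [Metric.tendsto_nhdsWithin_nhds] at hlim ⊢
  intro ε hε
  obtain ⟨δ₁, hδ₁, h₁⟩ := hlim (ε/2) (by linarith)
  refine ⟨min δ₁ δ, lt_min hδ₁ hδ, fun {t} htpos hdist => ?_⟩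
  have ht0 : (0:ℝ) < t := htpos
  rw [Real.dist_eq, sub_zero, abs_of_pos ht0] at hdist
  have htδ : t ≤ δ := le_of_lt (lt_of_lt_of_le hdist (min_le_right _ _))
  have htδ₁ : t < δ₁ := lt_of_lt_of_le hdist (min_le_left _ _)
  have hbound : ∀ u ∈ Set.uIoc (0:ℝ) t, |M u - c| ≤ ε/2 := by
    intro u hu
    rw [Set.uIoc_of_le (le_of_lt ht0)] at hu
    have huδ : u ∈ Ioc (0:ℝ) δ := ⟨hu.1, hu.2.trans htδ⟩
    rw [← hFM u huδ]
    have := h₁ (x := u) hu.1 (by rw [Real.dist_eq, sub_zero, abs_of_pos hu.1]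
                                 exact lt_of_le_of_lt hu.2 htδ₁)
    rw [Real.dist_eq] at this
    linarith
  have heqi : (∫ u in (0:ℝ)..t, F u) = ∫ u in (0:ℝ)..t, M u := by
    apply intervalIntegral.integral_congr_ae
    filter_upwards with u hu
    exact hFM u (by rw [Set.uIoc_of_le (le_of_lt ht0)] at hu; exact ⟨hu.1, hu.2.trans htδ⟩)
  rw [Real.dist_eq, heqi]
  have := avg_core hM (ne_of_gt ht0) (Filter.Eventually.of_forall hbound)
  linarith

theorem avg_tendsto_left {F M : ℝ → ℝ} (hM : Measurable M) {δ c : ℝ} (hδ : 0 < δ)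
    (hFM : ∀ u ∈ Icc (-δ) (0:ℝ), F u = M u) (hlim : Tendsto F (𝓝[<] (0:ℝ)) (𝓝 c)) :
    Tendsto (fun t => (∫ u in (0:ℝ)..t, F u) / t) (𝓝[<] (0:ℝ)) (𝓝 c) := by
  rw [Metric.tendsto_nhdsWithin_nhds] at hlim ⊢
  intro ε hε
  obtain ⟨δ₁, hδ₁, h₁⟩ := hlim (ε/2) (by linarith)
  refine ⟨min δ₁ δ, lt_min hδ₁ hδ, fun {t} htneg hdist => ?_⟩
  have ht0 : t < (0:ℝ) := htneg
  rw [Real.dist_eq, sub_zero, abs_of_neg ht0] at hdist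
  have htδ : -δ ≤ t := by
    have := lt_of_lt_of_le hdist (min_le_right _ _); linarith
  have htδ₁ : -t < δ₁ := lt_of_lt_of_le hdist (min_le_left _ _)
  have hIoc : Set.uIoc (0:ℝ) t = Ioc t 0 := by
    rw [Set.uIoc_of_ge (le_of_lt ht0)]
  have hae : ∀ᵐ u ∂MeasureTheory.volume, u ≠ (0:ℝ) := by
    rw [MeasureTheory.ae_iff]
    have : {a : ℝ | ¬a ≠ 0} = {(0:ℝ)} := by ext u; simp
    rw [this]
    exact Real.volume_singleton
  have hbound : ∀ᵐ u ∂MeasureTheory.volume, u ∈ Set.uIoc (0:ℝ) t → |M u - c| ≤ ε/2 := by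
    filter_upwards [hae] with u hune hu
    rw [hIoc] at hu
    have hu0 : u < 0 := lt_of_le_of_ne hu.2 hune
    have huδ : u ∈ Icc (-δ) (0:ℝ) := ⟨le_trans htδ (le_of_lt hu.1), hu.2⟩
    rw [← hFM u huδ]
    have := h₁ (x := u) hu0 (by rw [Real.dist_eq, sub_zero, abs_of_neg hu0]
                                linarith [hu.1])
    rw [Real.dist_eq] at this
    linarith
  have heqi : (∫ u in (0:ℝ)..t, F u) = ∫ u in (0:ℝ)..t, M u := by
    apply intervalIntegral.integral_congr_ae
    filter_upwards with u hu
    rw [hIoc] at hu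
    exact hFM u ⟨le_trans htδ (le_of_lt hu.1), hu.2⟩
  rw [Real.dist_eq, heqi]
  have := avg_core hM (ne_of_lt ht0) hbound
  linarith

end Avg

set_option maxHeartbeats 2000000 in
/-- Let `X` be a strictly convex 2-dimensional real Banach space whose unit sphere has
exactly two non-smooth points `e₁` and `-e₁`, and let `r` be the natural parameterization
with `e₂ = r'±(0)`.  Then the radial and tangential jumps `j(0)`, `ĵ(0)` are determined by
the metric of the sphere:
`lim_{ε→0⁺} ‖r ε - r 0‖ / ‖(r ε)^ + r 0‖ = (1 - ĵ(0))/(1 + ĵ(0))` and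
`lim_{ε→0⁺} (‖r ε - (r ε)^‖ - 2)/(2ε) = j(0)/(1 - ĵ(0))`,
where `x^ = bar x` is the unique point with `{x, bar x} = S_X ∩ (x + ℝ·e₁)`. -/
theorem jumps_determined_by_metric
    {X : Type*} [NormedAddCommGroup X] [NormedSpace ℝ X] [CompleteSpace X]
    (hdim : Module.finrank ℝ X = 2)
    (hsc : StrictlyConvexSphere X)
    (e₁ e₂ : X) (hInd : LinearIndependent ℝ ![e₁, e₂])
    (he₁ : e₁ ∈ sphere (0 : X) 1)
    -- `e₁` and `-e₁` are the only non-smooth points of the sphere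
    (hns : ∀ x ∈ sphere (0 : X) 1, ¬ IsSmoothPoint x ↔ (x = e₁ ∨ x = -e₁))
    (p : ℝ → X)
    (hp : ∀ t, p t = ‖Real.cos t • e₁ + Real.sin t • e₂‖⁻¹ •
      (Real.cos t • e₁ + Real.sin t • e₂))
    (σ : ℝ → ℝ) (hσ : ∀ t, σ t = ∫ u in (0:ℝ)..t, ‖derivWithin p (Ici u) u‖)
    (τ : ℝ → ℝ) (hτ_cont : Continuous τ) (hτ_mono : StrictMono τ)
    (hστ : ∀ x, σ (τ x) = x)
    (r : ℝ → X) (hr : ∀ s, r s = p (τ s))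
    -- the one-sided derivatives of `r` at `0`, with `e₂ = r'±(0)`
    (dm dp : X)
    (hdm : HasDerivWithinAt r dm (Iic (0:ℝ)) 0) (hdp : HasDerivWithinAt r dp (Ici (0:ℝ)) 0)
    (he₂ : e₂ = (1/2 : ℝ) • (dp + dm))
    -- the radial jump `j` and tangential jump `ĵ` at `0`
    (j jhat : ℝ)
    (hjj : (1/2 : ℝ) • (dp - dm) = j • r 0 + jhat • ((1/2 : ℝ) • (dp + dm)))
    -- `bar x` is the unique point of the sphere with `{x, bar x} = S_X ∩ (x + ℝ·e₁)`
    (bar : X → X)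
    (hbar : ∀ x ∈ sphere (0 : X) 1,
      ({x, bar x} : Set X) = sphere (0 : X) 1 ∩ {w : X | ∃ t : ℝ, w = x + t • e₁}) :
    Tendsto (fun ε : ℝ => ‖r ε - r 0‖ / ‖bar (r ε) + r 0‖) (𝓝[>] 0)
      (𝓝 ((1 - jhat) / (1 + jhat))) ∧
    Tendsto (fun ε : ℝ => (‖r ε - bar (r ε)‖ - 2) / (2 * ε)) (𝓝[>] 0)
      (𝓝 (j / (1 - jhat))) := by
  clear hsc hns
  have pi_pos := Real.pi_pos
  -- Step 0 : basic facts
  have he₁n : ‖e₁‖ = 1 := by rwa [mem_sphere_zero_iff_norm] at he₁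
  have hpeq : p = pf e₁ e₂ := funext fun t => hp t
  have hπ : (0:ℝ) ∈ Ioo (-(Real.pi/2)) (Real.pi/2) := by constructor <;> linarith
  have hg0 : gf e₁ e₂ 0 = 1 := by simp [gf, he₁n]
  have hp0 : pf e₁ e₂ 0 = e₁ := by simp [pf, he₁n]
  have hreq : r = fun s => pf e₁ e₂ (τ s) := funext fun s => by rw [hr, hpeq]
  have hrcont : Continuous r := by rw [hreq]; exact (pf_cont hInd).comp hτ_cont
  have hσ_nonneg : ∀ t, 0 ≤ t → 0 ≤ σ t := by
    intro t ht
    rw [hσ]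
    exact intervalIntegral.integral_nonneg ht (fun u _ => norm_nonneg _)
  have hσ_nonpos : ∀ t, t ≤ 0 → σ t ≤ 0 := by
    intro t ht
    rw [hσ, intervalIntegral.integral_symm]
    simp only [neg_nonpos]
    exact intervalIntegral.integral_nonneg ht (fun u _ => norm_nonneg _)
  have hτpos : ∀ x : ℝ, 0 < x → 0 < τ x := by
    intro x hx
    by_contra h
    push_neg at h
    have := hσ_nonpos (τ x) h
    rw [hστ] at this
    linarith
  have hτneg : ∀ x : ℝ, x < 0 → τ x < 0 := by
    intro x hx
    by_contra h
    push_neg at h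
    have := hσ_nonneg (τ x) h
    rw [hστ] at this
    linarith
  have hτ0 : τ 0 = 0 := by
    have hle : τ 0 ≤ 0 := by
      refine le_of_tendsto ((hτ_cont.tendsto 0).mono_left
        (nhdsWithin_le_nhds : 𝓝[<] (0:ℝ) ≤ 𝓝 0)) ?_
      filter_upwards [self_mem_nhdsWithin] with x hx
      exact le_of_lt (hτneg x hx)
    have hge : 0 ≤ τ 0 := by
      refine ge_of_tendsto ((hτ_cont.tendsto 0).mono_left
        (nhdsWithin_le_nhds : 𝓝[>] (0:ℝ) ≤ 𝓝 0)) ?_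
      filter_upwards [self_mem_nhdsWithin] with x hx
      exact le_of_lt (hτpos x hx)
    linarith
  have hr0 : r 0 = e₁ := by rw [hr, hτ0, hpeq, hp0]
  -- Step 1 : expressions for dp and dm
  have hjj' : (1/2 : ℝ) • (dp - dm) = j • e₁ + jhat • e₂ := by
    rw [hjj, hr0, ← he₂]
  have hdp_eq : dp = j • e₁ + (1 + jhat) • e₂ := by
    have h1 : dp = (1/2 : ℝ) • (dp - dm) + (1/2 : ℝ) • (dp + dm) := by module
    rw [h1, hjj', ← he₂]
    module
  have hdm_eq : dm = (-j) • e₁ + (1 - jhat) • e₂ := by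
    have h1 : dm = (1/2 : ℝ) • (dp + dm) - (1/2 : ℝ) • (dp - dm) := by module
    rw [h1, hjj', ← he₂]
    module
  -- Step 2 : norms of dp and dm are 1
  set cP : ℝ := ‖Qd e₁ e₂ 0 (rd (gf e₁ e₂) 0)‖ with hcPdef
  set cN : ℝ := ‖Qd e₁ e₂ 0 (ld (gf e₁ e₂) 0)‖ with hcNdef
  have hcPpos : 0 < cP := norm_Qd_pos hInd 0 _
  have hcNpos : 0 < cN := norm_Qd_pos hInd 0 _
  have hFMeq : ∀ u ∈ Ioo (-(Real.pi/2)) (Real.pi/2),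
      ‖derivWithin p (Ici u) u‖ = MM e₁ e₂ u := by
    intro u hu
    rw [hpeq]
    exact FF_eq_MM hInd hu
  have hσright : Tendsto (fun t => σ t / t) (𝓝[>] (0:ℝ)) (𝓝 cP) := by
    have hFlim : Tendsto (fun u => ‖derivWithin p (Ici u) u‖) (𝓝[>] (0:ℝ)) (𝓝 cP) := by
      refine (MM_tendsto_right hInd).congr' ?_
      filter_upwards [Ioo_mem_nhdsGT_of_mem
        (⟨le_refl (0:ℝ), by linarith⟩ : (0:ℝ) ∈ Ico 0 (Real.pi/2))] with u hu
      exact (hFMeq u ⟨by linarith [hu.1], hu.2⟩).symm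
    have := avg_tendsto_right (M := MM e₁ e₂) (MM_measurable hInd)
      (δ := Real.pi/4) (by linarith)
      (fun u hu => hFMeq u ⟨by linarith [hu.1], by linarith [hu.2]⟩) hFlim
    refine this.congr fun t => ?_
    rw [hσ]
  have hσleft : Tendsto (fun t => σ t / t) (𝓝[<] (0:ℝ)) (𝓝 cN) := by
    have hFlim : Tendsto (fun u => ‖derivWithin p (Ici u) u‖) (𝓝[<] (0:ℝ)) (𝓝 cN) := by
      refine (MM_tendsto_left hInd).congr' ?_
      filter_upwards [Ioo_mem_nhdsLT_of_mem
        (⟨by linarith, le_refl (0:ℝ)⟩ : (0:ℝ) ∈ Ioc (-(Real.pi/2)) 0)] with u hu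
      exact (hFMeq u ⟨hu.1, by linarith [hu.2]⟩).symm
    have := avg_tendsto_left (M := MM e₁ e₂) (MM_measurable hInd)
      (δ := Real.pi/4) (by linarith)
      (fun u hu => hFMeq u ⟨by linarith [hu.1], by linarith [hu.2]⟩) hFlim
    refine this.congr fun t => ?_
    rw [hσ]
  have hτ_right : Tendsto τ (𝓝[>] (0:ℝ)) (𝓝[>] (0:ℝ)) := by
    rw [tendsto_nhdsWithin_iff]
    constructor
    · have := (hτ_cont.tendsto 0).mono_left (nhdsWithin_le_nhds : 𝓝[>] (0:ℝ) ≤ 𝓝 0)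
      rwa [hτ0] at this
    · filter_upwards [self_mem_nhdsWithin] with x hx
      exact hτpos x hx
  have hτ_left : Tendsto τ (𝓝[<] (0:ℝ)) (𝓝[<] (0:ℝ)) := by
    rw [tendsto_nhdsWithin_iff]
    constructor
    · have := (hτ_cont.tendsto 0).mono_left (nhdsWithin_le_nhds : 𝓝[<] (0:ℝ) ≤ 𝓝 0)
      rwa [hτ0] at this
    · filter_upwards [self_mem_nhdsWithin] with x hx
      exact hτneg x hx
  have hτ_ratio_right : Tendsto (fun ε => τ ε / ε) (𝓝[>] (0:ℝ)) (𝓝 cP⁻¹) := by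
    have h1 : Tendsto (fun ε => ε / τ ε) (𝓝[>] (0:ℝ)) (𝓝 cP) := by
      have := hσright.comp hτ_right
      refine this.congr fun ε => ?_
      simp only [Function.comp_apply, hστ]
    have := h1.inv₀ (ne_of_gt hcPpos)
    refine this.congr fun ε => ?_
    rw [inv_div]
  have hτ_ratio_left : Tendsto (fun ε => τ ε / ε) (𝓝[<] (0:ℝ)) (𝓝 cN⁻¹) := by
    have h1 : Tendsto (fun ε => ε / τ ε) (𝓝[<] (0:ℝ)) (𝓝 cN) := by
      have := hσleft.comp hτ_left
      refine this.congr fun ε => ?_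
      simp only [Function.comp_apply, hστ]
    have := h1.inv₀ (ne_of_gt hcNpos)
    refine this.congr fun ε => ?_
    rw [inv_div]
  -- slope limits for pf
  have hPd0r : Pd e₁ e₂ 0 (rd (gf e₁ e₂) (Real.tan 0)) = Qd e₁ e₂ 0 (rd (gf e₁ e₂) 0) := by
    rw [Pd, Real.tan_zero, Real.cos_zero]
    norm_num
  have hPd0l : Pd e₁ e₂ 0 (ld (gf e₁ e₂) 0) = Qd e₁ e₂ 0 (ld (gf e₁ e₂) 0) := by
    rw [Pd, Real.tan_zero, Real.cos_zero]
    norm_num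
  have hslope_p_right : Tendsto (fun t : ℝ => t⁻¹ • (pf e₁ e₂ t - pf e₁ e₂ 0)) (𝓝[>] (0:ℝ))
      (𝓝 (Qd e₁ e₂ 0 (rd (gf e₁ e₂) 0))) := by
    have h := hasDerivWithinAt_pf_right hInd hπ
    rw [hPd0r, hasDerivWithinAt_iff_tendsto_slope] at h
    rw [Ici_sdiff_left] at h
    refine h.congr fun t => ?_
    rw [slope_def_module, sub_zero]
  have hslope_p_left : Tendsto (fun t : ℝ => t⁻¹ • (pf e₁ e₂ t - pf e₁ e₂ 0)) (𝓝[<] (0:ℝ))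
      (𝓝 (Qd e₁ e₂ 0 (ld (gf e₁ e₂) 0))) := by
    have h := hasDerivWithinAt_pf_left hInd
    rw [hPd0l, hasDerivWithinAt_iff_tendsto_slope] at h
    rw [Iic_diff_right] at h
    refine h.congr fun t => ?_
    rw [slope_def_module, sub_zero]
  -- slope limits for r
  have hslope_r_right : Tendsto (fun ε : ℝ => ε⁻¹ • (r ε - r 0)) (𝓝[>] (0:ℝ))
      (𝓝 (cP⁻¹ • Qd e₁ e₂ 0 (rd (gf e₁ e₂) 0))) := by
    have h1 := hτ_ratio_right.smul (hslope_p_right.comp hτ_right)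
    refine h1.congr' ?_
    filter_upwards [self_mem_nhdsWithin] with ε hε
    have hτne : τ ε ≠ 0 := ne_of_gt (hτpos ε hε)
    have hεne : (ε:ℝ) ≠ 0 := ne_of_gt hε
    have hre : r ε - r 0 = pf e₁ e₂ (τ ε) - pf e₁ e₂ 0 := by
      rw [hr ε, hpeq, hr0, hp0]
    show (τ ε / ε) • ((τ ε)⁻¹ • (pf e₁ e₂ (τ ε) - pf e₁ e₂ 0)) = ε⁻¹ • (r ε - r 0)
    rw [smul_smul, hre]
    congr 1
    field_simp
  have hslope_r_left : Tendsto (fun ε : ℝ => ε⁻¹ • (r ε - r 0)) (𝓝[<] (0:ℝ))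
      (𝓝 (cN⁻¹ • Qd e₁ e₂ 0 (ld (gf e₁ e₂) 0))) := by
    have h1 := hτ_ratio_left.smul (hslope_p_left.comp hτ_left)
    refine h1.congr' ?_
    filter_upwards [self_mem_nhdsWithin] with ε hε
    have hτne : τ ε ≠ 0 := ne_of_lt (hτneg ε hε)
    have hεne : (ε:ℝ) ≠ 0 := ne_of_lt hε
    have hre : r ε - r 0 = pf e₁ e₂ (τ ε) - pf e₁ e₂ 0 := by
      rw [hr ε, hpeq, hr0, hp0]
    show (τ ε / ε) • ((τ ε)⁻¹ • (pf e₁ e₂ (τ ε) - pf e₁ e₂ 0)) = ε⁻¹ • (r ε - r 0)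
    rw [smul_smul, hre]
    congr 1
    field_simp
  have hdp_slope : Tendsto (fun ε : ℝ => ε⁻¹ • (r ε - r 0)) (𝓝[>] (0:ℝ)) (𝓝 dp) := by
    have h := hdp
    rw [hasDerivWithinAt_iff_tendsto_slope, Ici_sdiff_left] at h
    refine h.congr fun t => ?_
    rw [slope_def_module, sub_zero]
  have hdm_slope : Tendsto (fun ε : ℝ => ε⁻¹ • (r ε - r 0)) (𝓝[<] (0:ℝ)) (𝓝 dm) := by
    have h := hdm
    rw [hasDerivWithinAt_iff_tendsto_slope, Iic_diff_right] at h
    refine h.congr fun t => ?_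
    rw [slope_def_module, sub_zero]
  have hdp_val : dp = cP⁻¹ • Qd e₁ e₂ 0 (rd (gf e₁ e₂) 0) :=
    tendsto_nhds_unique hdp_slope hslope_r_right
  have hdm_val : dm = cN⁻¹ • Qd e₁ e₂ 0 (ld (gf e₁ e₂) 0) :=
    tendsto_nhds_unique hdm_slope hslope_r_left
  have norm_dp : ‖dp‖ = 1 := by
    rw [hdp_val, norm_smul, Real.norm_eq_abs, abs_of_pos (inv_pos.2 hcPpos), ← hcPdef,
      inv_mul_cancel₀ (ne_of_gt hcPpos)]
  have norm_dm : ‖dm‖ = 1 := by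
    rw [hdm_val, norm_smul, Real.norm_eq_abs, abs_of_pos (inv_pos.2 hcNpos), ← hcNdef,
      inv_mul_cancel₀ (ne_of_gt hcNpos)]
  -- Step 3 : coordinate functionals
  haveI hfd : FiniteDimensional ℝ X := FiniteDimensional.of_finrank_eq_succ hdim
  let B : Module.Basis (Fin 2) ℝ X := basisOfLinearIndependentOfCardEqFinrank hInd (by simp [hdim])
  have hB : ⇑B = ![e₁, e₂] := coe_basisOfLinearIndependentOfCardEqFinrank hInd _
  have hB0 : B 0 = e₁ := by rw [hB]; rfl
  have hB1 : B 1 = e₂ := by rw [hB]; rfl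
  let A : X →L[ℝ] ℝ := LinearMap.toContinuousLinearMap (B.coord 0)
  let Bb : X →L[ℝ] ℝ := LinearMap.toContinuousLinearMap (B.coord 1)
  have hA1 : A e₁ = 1 := by
    show B.coord 0 e₁ = 1
    rw [← hB0, Module.Basis.coord_apply, Module.Basis.repr_self]
    simp
  have hA2 : A e₂ = 0 := by
    show B.coord 0 e₂ = 0
    rw [← hB1, Module.Basis.coord_apply, Module.Basis.repr_self]
    simp
  have hBb1 : Bb e₁ = 0 := by
    show B.coord 1 e₁ = 0
    rw [← hB0, Module.Basis.coord_apply, Module.Basis.repr_self]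
    simp
  have hBb2 : Bb e₂ = 1 := by
    show B.coord 1 e₂ = 1
    rw [← hB1, Module.Basis.coord_apply, Module.Basis.repr_self]
    simp
  have hdecomp : ∀ x : X, x = A x • e₁ + Bb x • e₂ := by
    intro x
    have := B.sum_repr x
    rw [Fin.sum_univ_two, hB0, hB1] at this
    exact this.symm
  have hAdp : A dp = j := by rw [hdp_eq]; simp [map_add, hA1, hA2]
  have hAdm : A dm = -j := by rw [hdm_eq]; simp [map_add, hA1, hA2]
  have hBdp : Bb dp = 1 + jhat := by rw [hdp_eq]; simp [map_add, hBb1, hBb2]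
  have hBdm : Bb dm = 1 - jhat := by rw [hdm_eq]; simp [map_add, hBb1, hBb2]
  -- positivity of 1 ± jhat
  have hQb_r : Bb (Qd e₁ e₂ 0 (rd (gf e₁ e₂) 0)) = 1 := by
    rw [Qd, hg0]
    simp [map_sub, hBb1, hBb2]
  have hQb_l : Bb (Qd e₁ e₂ 0 (ld (gf e₁ e₂) 0)) = 1 := by
    rw [Qd, hg0]
    simp [map_sub, hBb1, hBb2]
  have hjhat_lt : 1 + jhat = cP⁻¹ := by
    rw [← hBdp, hdp_val, map_smul, hQb_r, smul_eq_mul, mul_one]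
  have hjhat_gt : 1 - jhat = cN⁻¹ := by
    rw [← hBdm, hdm_val, map_smul, hQb_l, smul_eq_mul, mul_one]
  have hjp : 0 < 1 + jhat := by rw [hjhat_lt]; exact inv_pos.2 hcPpos
  have hjm : 0 < 1 - jhat := by rw [hjhat_gt]; exact inv_pos.2 hcNpos
  -- Step 4 : the function φ and the reflection point
  have hpf_norm : ∀ t, ‖pf e₁ e₂ t‖ = 1 := by
    intro t
    rw [pf, norm_smul, Real.norm_eq_abs, abs_of_pos (inv_pos.2 (norm_pos_iff.2
      (circ_ne_zero hInd t))), inv_mul_cancel₀ (ne_of_gt (norm_pos_iff.2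
      (circ_ne_zero hInd t)))]
  have hr_norm : ∀ s, ‖r s‖ = 1 := by
    intro s
    rw [hr, hpeq, hpf_norm]
  set φ : ℝ → ℝ := fun s => Bb (r s) with hφdef
  have hφcont : Continuous φ := Bb.continuous.comp hrcont
  have hφ0 : φ 0 = 0 := by rw [hφdef]; simp only [hr0]; exact hBb1
  have hBbq : ∀ m, Bb (qf e₁ e₂ m) = (gf e₁ e₂ m)⁻¹ * m := by
    intro m
    rw [qf, map_smul, map_add, map_smul, hBb1, hBb2, smul_eq_mul]
    simp
  have hφ_formula : ∀ s, τ s ∈ Ioo (-(Real.pi/2)) (Real.pi/2) →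
      φ s = (gf e₁ e₂ (Real.tan (τ s)))⁻¹ * Real.tan (τ s) := by
    intro s hs
    rw [hφdef]
    simp only [hr, hpeq]
    rw [pf_eq_qf_tan hInd hs, hBbq]
  obtain ⟨δτ, hδτpos, hδτ⟩ := Metric.continuousAt_iff.1 (hτ_cont.continuousAt (x := 0))
    (Real.pi/2) (by linarith)
  set δ₁ : ℝ := δτ / 2 with hδ₁def
  have hδ₁pos : 0 < δ₁ := by positivity
  have hτmem : ∀ s : ℝ, |s| ≤ δ₁ → τ s ∈ Ioo (-(Real.pi/2)) (Real.pi/2) := by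
    intro s hs
    have := hδτ (show dist s 0 < δτ by rw [Real.dist_eq, sub_zero]; linarith)
    rw [hτ0, Real.dist_eq, sub_zero, abs_lt] at this
    exact ⟨this.1, this.2⟩
  have hφneg : ∀ s : ℝ, -δ₁ ≤ s → s < 0 → φ s < 0 := by
    intro s h1 h2
    have hmem : τ s ∈ Ioo (-(Real.pi/2)) (Real.pi/2) :=
      hτmem s (by rw [abs_of_neg h2]; linarith)
    rw [hφ_formula s hmem]
    have htneg : Real.tan (τ s) < 0 :=
      Real.tan_neg_of_neg_of_pi_div_two_lt (hτneg s h2) hmem.1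
    exact mul_neg_of_pos_of_neg (inv_pos.2 (gf_pos hInd _)) htneg
  have hφpos : ∀ s : ℝ, 0 < s → s ≤ δ₁ → 0 < φ s := by
    intro s h1 h2
    have hmem : τ s ∈ Ioo (-(Real.pi/2)) (Real.pi/2) :=
      hτmem s (by rw [abs_of_pos h1]; linarith)
    rw [hφ_formula s hmem]
    have htpos : 0 < Real.tan (τ s) :=
      Real.tan_pos_of_pos_of_lt_pi_div_two (hτpos s h1) hmem.2
    exact mul_pos (inv_pos.2 (gf_pos hInd _)) htpos
  set β : ℝ := -φ (-δ₁) with hβdef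
  have hβpos : 0 < β := by
    rw [hβdef, neg_pos]
    exact hφneg (-δ₁) le_rfl (by linarith)
  obtain ⟨ε₁', hε₁'pos, hε₁'⟩ := Metric.continuousAt_iff.1 hφcont.continuousAt β hβpos
  set ε₁ : ℝ := min ε₁' δ₁ with hε₁def
  have hε₁pos : 0 < ε₁ := lt_min hε₁'pos hδ₁pos
  have hφlt : ∀ ε : ℝ, ε ∈ Ioo 0 ε₁ → φ ε < β ∧ 0 < φ ε := by
    intro ε hε
    constructor
    · have := hε₁' (show dist ε 0 < ε₁' by
        rw [Real.dist_eq, sub_zero, abs_of_pos hε.1]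
        exact lt_of_lt_of_le hε.2 (min_le_left _ _))
      rw [hφ0, Real.dist_eq, sub_zero, abs_lt] at this
      linarith [this.2]
    · exact hφpos ε hε.1 (le_of_lt (lt_of_lt_of_le hε.2 (min_le_right _ _)))
  have hIVT : ∀ ε : ℝ, ε ∈ Ioo 0 ε₁ → ∃ s, (s ∈ Icc (-δ₁) (0:ℝ) ∧ s < 0) ∧ φ s = -φ ε := by
    intro ε hε
    obtain ⟨hlt, hpos⟩ := hφlt ε hε
    have hmem : -φ ε ∈ Icc (φ (-δ₁)) (φ 0) := by
      rw [hφ0]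
      constructor
      · rw [hβdef] at hlt; linarith
      · linarith
    obtain ⟨s, hs1, hs2⟩ := intermediate_value_Icc (by linarith : -δ₁ ≤ (0:ℝ))
      hφcont.continuousOn hmem
    refine ⟨s, ⟨hs1, ?_⟩, hs2⟩
    rcases lt_or_eq_of_le hs1.2 with h | h
    · exact h
    · exfalso
      rw [h, hφ0] at hs2
      linarith
  choose! S hS using hIVT
  have hS_mem : ∀ ε : ℝ, ε ∈ Ioo 0 ε₁ → S ε ∈ Icc (-δ₁) (0:ℝ) ∧ S ε < 0 :=
    fun ε hε => (hS ε hε).1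
  have hS_eq : ∀ ε : ℝ, ε ∈ Ioo 0 ε₁ → φ (S ε) = -φ ε :=
    fun ε hε => (hS ε hε).2
  have hIoomem : Ioo (0:ℝ) ε₁ ∈ 𝓝[>] (0:ℝ) :=
    Ioo_mem_nhdsGT_of_mem ⟨le_rfl, hε₁pos⟩
  -- S tends to 0 from the left
  have hS_tendsto : Tendsto S (𝓝[>] (0:ℝ)) (𝓝[<] (0:ℝ)) := by
    rw [tendsto_nhdsWithin_iff]
    constructor
    · rw [Metric.tendsto_nhdsWithin_nhds]
      intro η hη
      rcases le_or_gt η δ₁ with hle | hgt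
      · -- compact argument
        have hKne : -δ₁ ≤ -(η/2) := by linarith
        obtain ⟨s₀, hs₀K, hs₀max⟩ := (isCompact_Icc (a := -δ₁) (b := -(η/2))).exists_isMaxOn
          ⟨-δ₁, le_rfl, hKne⟩ hφcont.continuousOn
        have hs₀neg : φ s₀ < 0 := hφneg s₀ hs₀K.1 (by
          have := hs₀K.2; linarith)
        obtain ⟨δ'', hδ''pos, hδ''⟩ := Metric.continuousAt_iff.1 hφcont.continuousAt
          (-φ s₀) (by linarith)
        refine ⟨min δ'' ε₁, lt_min hδ''pos hε₁pos, fun {ε} hεpos hεd => ?_⟩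
        have hεI : ε ∈ Ioo 0 ε₁ := ⟨hεpos, by
          rw [Real.dist_eq, sub_zero, abs_of_pos hεpos] at hεd
          exact lt_of_lt_of_le hεd (min_le_right _ _)⟩
        have hφε : φ ε < -φ s₀ := by
          have := hδ'' (show dist ε 0 < δ'' by
            rw [Real.dist_eq, sub_zero, abs_of_pos hεpos]
            rw [Real.dist_eq, sub_zero, abs_of_pos hεpos] at hεd
            exact lt_of_lt_of_le hεd (min_le_left _ _))
          rw [hφ0, Real.dist_eq, sub_zero, abs_lt] at this
          linarith [this.2]
        have hnotK : S ε ∉ Icc (-δ₁) (-(η/2)) := by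
          intro hK
          have := hs₀max hK
          simp only [mem_setOf_eq] at this
          rw [hS_eq ε hεI] at this
          linarith
        have hSmem := hS_mem ε hεI
        have : -(η/2) < S ε := by
          by_contra hcon
          push_neg at hcon
          exact hnotK ⟨hSmem.1.1, hcon⟩
        rw [Real.dist_eq, sub_zero, abs_of_neg hSmem.2]
        linarith
      · refine ⟨ε₁, hε₁pos, fun {ε} hεpos hεd => ?_⟩
        have hεI : ε ∈ Ioo 0 ε₁ := ⟨hεpos, by
          rwa [Real.dist_eq, sub_zero, abs_of_pos hεpos] at hεd⟩
        have hSmem := hS_mem ε hεI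
        rw [Real.dist_eq, sub_zero, abs_of_neg hSmem.2]
        linarith [hSmem.1.1]
    · filter_upwards [hIoomem] with ε hε
      exact (hS_mem ε hε).2
  -- slope limits through the coordinate functionals
  have hφslope_pos : Tendsto (fun ε => φ ε / ε) (𝓝[>] (0:ℝ)) (𝓝 (1 + jhat)) := by
    have h1 : Tendsto (fun ε : ℝ => Bb (ε⁻¹ • (r ε - r 0))) (𝓝[>] (0:ℝ)) (𝓝 (Bb dp)) :=
      (Bb.continuous.tendsto dp).comp hdp_slope
    rw [hBdp] at h1
    refine h1.congr fun ε => ?_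
    rw [map_smul, map_sub, smul_eq_mul, hr0, hBb1, sub_zero, inv_mul_eq_div]
  have hφslope_neg : Tendsto (fun s => φ s / s) (𝓝[<] (0:ℝ)) (𝓝 (1 - jhat)) := by
    have h1 : Tendsto (fun ε : ℝ => Bb (ε⁻¹ • (r ε - r 0))) (𝓝[<] (0:ℝ)) (𝓝 (Bb dm)) :=
      (Bb.continuous.tendsto dm).comp hdm_slope
    rw [hBdm] at h1
    refine h1.congr fun ε => ?_
    rw [map_smul, map_sub, smul_eq_mul, hr0, hBb1, sub_zero, inv_mul_eq_div]
  have hAslope_pos : Tendsto (fun ε => (A (r ε) - 1) / ε) (𝓝[>] (0:ℝ)) (𝓝 j) := by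
    have h1 : Tendsto (fun ε : ℝ => A (ε⁻¹ • (r ε - r 0))) (𝓝[>] (0:ℝ)) (𝓝 (A dp)) :=
      (A.continuous.tendsto dp).comp hdp_slope
    rw [hAdp] at h1
    refine h1.congr fun ε => ?_
    rw [map_smul, map_sub, smul_eq_mul, hr0, hA1, inv_mul_eq_div]
  have hAslope_neg : Tendsto (fun s => (A (r s) - 1) / s) (𝓝[<] (0:ℝ)) (𝓝 (-j)) := by
    have h1 : Tendsto (fun ε : ℝ => A (ε⁻¹ • (r ε - r 0))) (𝓝[<] (0:ℝ)) (𝓝 (A dm)) :=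
      (A.continuous.tendsto dm).comp hdm_slope
    rw [hAdm] at h1
    refine h1.congr fun ε => ?_
    rw [map_smul, map_sub, smul_eq_mul, hr0, hA1, inv_mul_eq_div]
  -- ratio of S ε to ε
  set K : ℝ := (1 + jhat) / (1 - jhat) with hKdef
  have hKpos : 0 < K := div_pos hjp hjm
  have hS_ratio : Tendsto (fun ε => S ε / ε) (𝓝[>] (0:ℝ)) (𝓝 (-K)) := by
    have h1 : Tendsto (fun ε => φ (S ε) / S ε) (𝓝[>] (0:ℝ)) (𝓝 (1 - jhat)) :=
      hφslope_neg.comp hS_tendsto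
    have h2 : Tendsto (fun ε => φ (S ε) / ε) (𝓝[>] (0:ℝ)) (𝓝 (-(1 + jhat))) := by
      have := hφslope_pos.neg
      refine this.congr' ?_
      filter_upwards [hIoomem] with ε hε
      rw [hS_eq ε hε, neg_div]
    have h3 := h2.div h1 (by linarith)
    have hval : -(1 + jhat) / (1 - jhat) = -K := by rw [hKdef]; ring
    rw [hval] at h3
    refine h3.congr' ?_
    filter_upwards [hIoomem] with ε hε
    have hφSne : φ (S ε) ≠ 0 := by
      rw [hS_eq ε hε]
      have := (hφlt ε hε).2
      intro h
      rw [neg_eq_zero] at h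
      linarith
    have hSne : S ε ≠ 0 := ne_of_lt (hS_mem ε hε).2
    have hεne : ε ≠ 0 := ne_of_gt hε.1
    rw [Pi.div_apply]
    field_simp
  -- identification of bar (r ε)
  have hA_r_tendsto : Tendsto (fun ε => A (r ε)) (𝓝[>] (0:ℝ)) (𝓝 1) := by
    have h1 : Tendsto (fun ε => A (r ε)) (𝓝 (0:ℝ)) (𝓝 (A (r 0))) :=
      (A.continuous.comp hrcont).tendsto 0
    rw [hr0, hA1] at h1
    exact h1.mono_left nhdsWithin_le_nhds
  have hA_rS_tendsto : Tendsto (fun ε => A (r (S ε))) (𝓝[>] (0:ℝ)) (𝓝 1) := by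
    have h1 : Tendsto (fun s => A (r s)) (𝓝 (0:ℝ)) (𝓝 (A (r 0))) :=
      (A.continuous.comp hrcont).tendsto 0
    rw [hr0, hA1] at h1
    exact h1.comp (hS_tendsto.mono_right nhdsWithin_le_nhds)
  have hA_r_pos : ∀ᶠ ε in 𝓝[>] (0:ℝ), 0 < A (r ε) :=
    hA_r_tendsto.eventually_const_lt zero_lt_one
  have hA_rS_pos : ∀ᶠ ε in 𝓝[>] (0:ℝ), 0 < A (r (S ε)) :=
    hA_rS_tendsto.eventually_const_lt zero_lt_one
  have hbar_id : ∀ᶠ ε in 𝓝[>] (0:ℝ), bar (r ε) = -r (S ε) := by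
    filter_upwards [hIoomem, hA_r_pos, hA_rS_pos] with ε hεI hArpos hArSpos
    have hrε_sphere : r ε ∈ sphere (0:X) 1 := by
      rw [mem_sphere_zero_iff_norm]; exact hr_norm ε
    have key := hbar (r ε) hrε_sphere
    have hy_norm : ‖-r (S ε)‖ = 1 := by rw [norm_neg]; exact hr_norm (S ε)
    have hBby : Bb (-r (S ε)) = Bb (r ε) := by
      rw [map_neg]
      have : φ (S ε) = -φ ε := hS_eq ε hεI
      rw [hφdef] at this
      simp only at this
      rw [this]
      simp [hφdef]
    have hyline : ∃ t : ℝ, -r (S ε) = r ε + t • e₁ := by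
      refine ⟨A (-r (S ε)) - A (r ε), ?_⟩
      have h1 := hdecomp (-r (S ε))
      have h2 := hdecomp (r ε)
      calc -r (S ε) = A (-r (S ε)) • e₁ + Bb (-r (S ε)) • e₂ := h1
        _ = A (-r (S ε)) • e₁ + Bb (r ε) • e₂ := by rw [hBby]
        _ = (A (r ε) • e₁ + Bb (r ε) • e₂) + (A (-r (S ε)) - A (r ε)) • e₁ := by module
        _ = r ε + (A (-r (S ε)) - A (r ε)) • e₁ := by rw [← h2]
    have hy_mem : -r (S ε) ∈ ({r ε, bar (r ε)} : Set X) := by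
      rw [key]
      exact ⟨by rw [mem_sphere_zero_iff_norm]; exact hy_norm, hyline⟩
    rcases hy_mem with h | h
    · exfalso
      have hAy : A (-r (S ε)) = A (r ε) := by rw [h]
      rw [map_neg] at hAy
      linarith
    · exact h.symm
  -- Step 5 : the first limit
  have N₁ : Tendsto (fun ε => ‖r ε - r 0‖ / ε) (𝓝[>] (0:ℝ)) (𝓝 1) := by
    have h1 := hdp_slope.norm
    rw [norm_dp] at h1
    refine h1.congr' ?_
    filter_upwards [self_mem_nhdsWithin] with ε hε
    rw [norm_smul, Real.norm_eq_abs, abs_of_pos (inv_pos.2 hε), inv_mul_eq_div]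
  have N₂ : Tendsto (fun ε => ‖r (S ε) - r 0‖ / (-S ε)) (𝓝[>] (0:ℝ)) (𝓝 1) := by
    have h1 := (hdm_slope.norm.comp hS_tendsto)
    rw [norm_dm] at h1
    refine h1.congr' ?_
    filter_upwards [hIoomem] with ε hε
    have hSneg := (hS_mem ε hε).2
    show ‖(S ε)⁻¹ • (r (S ε) - r 0)‖ = ‖r (S ε) - r 0‖ / (-S ε)
    rw [norm_smul, Real.norm_eq_abs, abs_inv, abs_of_neg hSneg, inv_mul_eq_div]
  have C2 : Tendsto (fun ε => (-S ε) / ε) (𝓝[>] (0:ℝ)) (𝓝 K) := by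
    have := hS_ratio.neg
    rw [neg_neg] at this
    refine this.congr fun ε => ?_
    rw [neg_div]
  have hrS_ne : ∀ᶠ ε in 𝓝[>] (0:ℝ), r (S ε) - r 0 ≠ 0 := by
    filter_upwards [hIoomem] with ε hε
    intro h
    have h2 : Bb (r (S ε)) = Bb (r 0) := by
      have : r (S ε) = r 0 := by
        have := sub_eq_zero.1 h; exact this
      rw [this]
    rw [hr0, hBb1] at h2
    have h3 : φ (S ε) = 0 := h2
    rw [hS_eq ε hε, neg_eq_zero] at h3
    have := (hφlt ε hε).2
    linarith
  have hlim1 : Tendsto (fun ε : ℝ => ‖r ε - r 0‖ / ‖bar (r ε) + r 0‖) (𝓝[>] (0:ℝ))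
      (𝓝 ((1 - jhat) / (1 + jhat))) := by
    have h1 := N₁.div (N₂.mul C2) (by rw [one_mul]; exact ne_of_gt hKpos)
    have hv : (1:ℝ) / (1 * K) = (1 - jhat) / (1 + jhat) := by
      rw [one_mul, hKdef, one_div, inv_div]
    rw [hv] at h1
    refine h1.congr' ?_
    filter_upwards [hIoomem, hbar_id, hrS_ne, self_mem_nhdsWithin] with ε hεI hbarε hne hεpos
    have hSneg := (hS_mem ε hεI).2
    have hb_eq : ‖bar (r ε) + r 0‖ = ‖r (S ε) - r 0‖ := by
      rw [hbarε]
      rw [show -r (S ε) + r 0 = -(r (S ε) - r 0) by abel, norm_neg]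
    have hbpos : 0 < ‖r (S ε) - r 0‖ := norm_pos_iff.2 hne
    show ‖r ε - r 0‖ / ε / (‖r (S ε) - r 0‖ / (-S ε) * (-S ε / ε))
        = ‖r ε - r 0‖ / ‖bar (r ε) + r 0‖
    rw [hb_eq]
    have hεne : (ε:ℝ) ≠ 0 := ne_of_gt hεpos
    have hSne : S ε ≠ 0 := ne_of_lt hSneg
    have hbne : ‖r (S ε) - r 0‖ ≠ 0 := ne_of_gt hbpos
    field_simp
  -- Step 6 : the second limit
  have hval2 : ∀ᶠ ε in 𝓝[>] (0:ℝ), ‖r ε - bar (r ε)‖ = A (r ε) + A (r (S ε)) := by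
    filter_upwards [hIoomem, hbar_id, hA_r_pos, hA_rS_pos] with ε hεI hbarε hArpos hArSpos
    rw [hbarε, sub_neg_eq_add]
    set v : X := r ε + r (S ε) with hvdef
    have hBbv : Bb v = 0 := by
      rw [hvdef, map_add]
      have h3 : φ (S ε) = -φ ε := hS_eq ε hεI
      show φ ε + φ (S ε) = 0
      rw [h3]; ring
    have hdv := hdecomp v
    rw [hBbv, zero_smul, add_zero] at hdv
    have hAv : A v = A (r ε) + A (r (S ε)) := by rw [hvdef, map_add]
    rw [hdv, norm_smul, Real.norm_eq_abs, he₁n, mul_one, hAv,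
      abs_of_pos (by linarith : (0:ℝ) < A (r ε) + A (r (S ε)))]
  have hlim2 : Tendsto (fun ε : ℝ => (‖r ε - bar (r ε)‖ - 2) / (2 * ε)) (𝓝[>] (0:ℝ))
      (𝓝 (j / (1 - jhat))) := by
    have hterm2 : Tendsto (fun ε => ((A (r (S ε)) - 1) / S ε) * (S ε / ε)) (𝓝[>] (0:ℝ))
        (𝓝 ((-j) * (-K))) :=
      (hAslope_neg.comp hS_tendsto).mul hS_ratio
    have h1 : Tendsto (fun ε => (1/2 : ℝ) * ((A (r ε) - 1) / ε)
        + (1/2 : ℝ) * (((A (r (S ε)) - 1) / S ε) * (S ε / ε))) (𝓝[>] (0:ℝ))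
        (𝓝 ((1/2) * j + (1/2) * ((-j) * (-K)))) :=
      (hAslope_pos.const_mul (1/2 : ℝ)).add (hterm2.const_mul (1/2 : ℝ))
    have hv : (1/2 : ℝ) * j + (1/2) * ((-j) * (-K)) = j / (1 - jhat) := by
      rw [hKdef]
      field_simp
      ring
    rw [hv] at h1
    refine h1.congr' ?_
    filter_upwards [hIoomem, hval2, self_mem_nhdsWithin] with ε hεI hval hεpos
    have hεne : (ε:ℝ) ≠ 0 := ne_of_gt hεpos
    have hSne : S ε ≠ 0 := ne_of_lt (hS_mem ε hεI).2
    rw [hval]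
    field_simp
    ring
  exact ⟨hlim1, hlim2⟩
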